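/- arXiv:1501.01507 — 7 statements merged into one kernel-verified Lean document; each statement's English description precedes it below -/
import Mathlib

section
/- Let P be a PEA and I a normal ideal in P. Then for a ∈ P: (i) a ∈ I iff a⁻⁻ ∈ I iff a˜˜ ∈ I; (ii) a⁻ ∈ I iff a˜ ∈ I. -/
open scoped Classical

/-- A generalized pseudo effect algebra: partial orthosummation modeled via `Option`. -/
structure GPEA (P : Type*) where
  oplus : P → P → Option P
  zero : P
  assoc₁ : ∀ {a b c ab s : P}, oplus a b = some ab → oplus ab c = some s →
    ∃ bc, oplus b c = some bc ∧ oplus a bc = some s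
  assoc₂ : ∀ {a b c bc s : P}, oplus b c = some bc → oplus a bc = some s →
    ∃ ab, oplus a b = some ab ∧ oplus ab c = some s
  conj : ∀ {a b s : P}, oplus a b = some s →
    (∃ c, oplus c a = some s) ∧ (∃ d, oplus b d = some s)
  cancel_right : ∀ {a b c s : P}, oplus a c = some s → oplus b c = some s → a = b
  cancel_left : ∀ {a b c s : P}, oplus c a = some s → oplus c b = some s → a = b
  oplus_zero : ∀ a : P, oplus a zero = some a
  zero_oplus : ∀ a : P, oplus zero a = some a
  pos : ∀ {a b : P}, oplus a b = some zero → a = zero ∧ b = zero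

namespace GPEA

variable {P Q : Type*}

/-- `a ≤ b` iff there is `c` with `a ⊕ c = b`. -/
def le (G : GPEA P) (a b : P) : Prop := ∃ c, G.oplus a c = some b

/-- `a ≤ b` (left version) iff there is `d` with `d ⊕ a = b`. -/
def leL (G : GPEA P) (a b : P) : Prop := ∃ d, G.oplus d a = some b

/-- An ideal: a nonempty, downward closed subset closed under existing orthosums. -/
def IsIdeal (G : GPEA P) (I : Set P) : Prop :=
  I.Nonempty ∧ (∀ a ∈ I, ∀ b : P, G.le b a → b ∈ I) ∧
    (∀ a ∈ I, ∀ b ∈ I, ∀ s : P, G.oplus a b = some s → s ∈ I)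

/-- A normal ideal: `a ⊕ c = c ⊕ b` implies `a ∈ I ↔ b ∈ I`. -/
def IsNormalIdeal (G : GPEA P) (I : Set P) : Prop :=
  G.IsIdeal I ∧ ∀ a b c s : P, G.oplus a c = some s → G.oplus c b = some s → (a ∈ I ↔ b ∈ I)

/-- Condition (R1) for an ideal. -/
def R1 (G : GPEA P) (I : Set P) : Prop :=
  ∀ i ∈ I, ∀ a b s : P, G.oplus a b = some s → G.le i s →
    ∃ j ∈ I, ∃ k ∈ I, G.le j a ∧ G.le k b ∧ ∃ t, G.oplus j k = some t ∧ G.le i t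

/-- Condition (R2) for an ideal. -/
def R2 (G : GPEA P) (I : Set P) : Prop :=
  ∀ i ∈ I, ∀ a : P, G.le i a →
    (∀ b x s : P, G.oplus x i = some a → G.oplus x b = some s →
      ∃ j ∈ I, G.le j b ∧ ∀ c, G.oplus j c = some b → ∃ t, G.oplus a c = some t) ∧
    (∀ b y s : P, G.oplus i y = some a → G.oplus b y = some s →
      ∃ k ∈ I, G.le k b ∧ ∀ z, G.oplus z k = some b → ∃ t, G.oplus z a = some t)

/-- A Riesz ideal is an ideal satisfying (R1) and (R2). -/
def IsRieszIdeal (G : GPEA P) (I : Set P) : Prop := G.IsIdeal I ∧ G.R1 I ∧ G.R2 I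

/-- A normal Riesz ideal. -/
def IsNormalRieszIdeal (G : GPEA P) (I : Set P) : Prop := G.IsNormalIdeal I ∧ G.R1 I ∧ G.R2 I

/-- A GPEA-morphism. -/
def IsMorphism (G : GPEA P) (H : GPEA Q) (φ : P → Q) : Prop :=
  ∀ a b s : P, G.oplus a b = some s → H.oplus (φ a) (φ b) = some (φ s)

/-- A unitizing GPEA-automorphism: a GPEA-automorphism `γ` such that
`γa ⊕ b` is defined iff `b ⊕ a` is defined. -/
def IsUnitizing (G : GPEA P) (γ : P → P) : Prop :=
  Function.Bijective γ ∧ G.IsMorphism G γ ∧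
    (∀ a b : P, (∃ s, G.oplus (γ a) (γ b) = some s) → ∃ t, G.oplus a b = some t) ∧
    (∀ a b : P, (∃ s, G.oplus (γ a) b = some s) ↔ ∃ t, G.oplus b a = some t)

/-- A weak congruence. -/
def IsWeakCong (G : GPEA P) (r : P → P → Prop) : Prop :=
  Equivalence r ∧ ∀ a b a₁ b₁ s s₁ : P, G.oplus a b = some s → G.oplus a₁ b₁ = some s₁ →
    r a a₁ → r b b₁ → r s s₁

/-- Condition (C3): a weak congruence satisfying it is a congruence. -/
def C3 (G : GPEA P) (r : P → P → Prop) : Prop :=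
  ∀ a b s : P, G.oplus a b = some s →
    (∀ a₁, r a a₁ → ∃ b₁, r b b₁ ∧ ∃ t, G.oplus a₁ b₁ = some t) ∧
    (∀ b₂, r b b₂ → ∃ a₂, r a a₂ ∧ ∃ t, G.oplus a₂ b₂ = some t)

/-- Condition (C4). -/
def C4 (G : GPEA P) (r : P → P → Prop) : Prop :=
  ∀ a b a₁ b₁ s t : P, r a b →
    ((G.oplus a a₁ = some s ∧ G.oplus b b₁ = some t ∧ r s t) ∨
      (G.oplus a₁ a = some s ∧ G.oplus b₁ b = some t ∧ r s t)) → r a₁ b₁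

/-- Condition (C5'). -/
def C5' (G : GPEA P) (r : P → P → Prop) : Prop :=
  ∀ a b c s : P, G.oplus b c = some s → r a s →
    ∃ a₁ a₂, r a₁ b ∧ r a₂ c ∧ G.oplus a₁ a₂ = some a

/-- Condition (CR): here `a \ c` is the unique `x` with `x ⊕ c = a`. -/
def CR (G : GPEA P) (r : P → P → Prop) : Prop :=
  ∀ a b : P, r a b → ∃ c d : P,
    G.le c a ∧ G.le a d ∧ G.le c b ∧ G.le b d ∧
    (∀ x, G.oplus x c = some a → r x G.zero) ∧
    (∀ x, G.oplus x c = some b → r x G.zero) ∧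
    (∀ x, G.oplus x a = some d → r x G.zero) ∧
    (∀ x, G.oplus x b = some d → r x G.zero)

/-- A Riesz congruence: a congruence satisfying (C4), (C5') and (CR). -/
def IsRieszCong (G : GPEA P) (r : P → P → Prop) : Prop :=
  G.IsWeakCong r ∧ G.C3 r ∧ G.C4 r ∧ G.C5' r ∧ G.CR r

/-- The relation `∼_I` induced by an ideal `I`: `a ∼_I b` iff there are
`i, j ∈ I` with `i ≤ a`, `j ≤ b` and `a \ i = b \ j`. -/
def simI (G : GPEA P) (I : Set P) (a b : P) : Prop :=
  ∃ i ∈ I, ∃ j ∈ I, ∃ d : P, G.oplus d i = some a ∧ G.oplus d j = some b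

/-- Condition (GCR) for the relation `∼_I`. -/
def GCR (G : GPEA P) (I : Set P) : Prop :=
  ∀ a b : P, G.simI I a b → ∃ i ∈ I, ∃ j ∈ I, ∃ s, G.oplus i a = some s ∧ G.oplus j b = some s

/-- The Riesz decomposition property. -/
def RDP (G : GPEA P) : Prop :=
  ∀ a b c d s : P, G.oplus a b = some s → G.oplus c d = some s →
    ∃ e₁₁ e₁₂ e₂₁ e₂₂ : P, G.oplus e₁₁ e₁₂ = some a ∧ G.oplus e₂₁ e₂₂ = some b ∧
      G.oplus e₁₁ e₂₁ = some c ∧ G.oplus e₁₂ e₂₂ = some d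

end GPEA

/-- A pseudo effect algebra: a GPEA with a largest element `1`. -/
structure PEA (P : Type*) extends GPEA P where
  one : P
  le_one : ∀ a : P, ∃ c, oplus a c = some one
  le_one' : ∀ a : P, ∃ d, oplus d a = some one

namespace PEA

variable {P : Type*}

/-- The right supplement `a˜`: the unique element with `a ⊕ a˜ = 1`. -/
noncomputable def rsup (U : PEA P) (a : P) : P := Classical.choose (U.le_one a)

/-- The left supplement `a⁻`: the unique element with `a⁻ ⊕ a = 1`. -/
noncomputable def lsup (U : PEA P) (a : P) : P := Classical.choose (U.le_one' a)

/-- A state on a PEA. -/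
def IsState (U : PEA P) (s : P → ℝ) : Prop :=
  (∀ a : P, 0 ≤ s a ∧ s a ≤ 1) ∧ s U.one = 1 ∧
    ∀ a b c : P, U.oplus a b = some c → s c = s a + s b

end PEA

/-- `U` is a binary unitization of the GPEA `G` via the embedding `ι`. -/
def IsBinaryUnitization {P Q : Type*} (G : GPEA P) (U : PEA Q) (ι : P → Q) : Prop :=
  Function.Injective ι ∧ ι G.zero = U.toGPEA.zero ∧
    (∀ a b : P, U.oplus (ι a) (ι b) = (G.oplus a b).map ι) ∧
    (∀ a : P, U.one ≠ ι a) ∧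
    (∀ x y : Q, x ∉ Set.range ι → y ∉ Set.range ι → U.oplus x y = none)

/-- The orthosummation of the `γ`-unitization on `P ⊕ P`
(`Sum.inl a` is `a ∈ P`, `Sum.inr b` is `ηb`). -/
noncomputable def uop {P : Type*} (G : GPEA P) (γ : P → P) :
    P ⊕ P → P ⊕ P → Option (P ⊕ P)
  | .inl a, .inl b => (G.oplus a b).map .inl
  | .inl a, .inr b => if h : G.leL a b then some (.inr (Classical.choose h)) else none
  | .inr a, .inl b => if h : G.le (γ b) a then some (.inr (Classical.choose h)) else none
  | .inr _, .inr _ => none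

/-- A PEA-isomorphism. -/
def IsPEAIso {A B : Type*} (U : PEA A) (V : PEA B) (φ : A → B) : Prop :=
  Function.Bijective φ ∧
    (∀ a b s : A, U.oplus a b = some s → V.oplus (φ a) (φ b) = some (φ s)) ∧
    (∀ a b : A, (∃ s, V.oplus (φ a) (φ b) = some s) → ∃ t, U.oplus a b = some t) ∧
    φ U.one = V.one

/-- The coordinatewise orthosummation on `I → P`. -/
noncomputable def piOplus {P : Type*} {I : Type*} (G : GPEA P) (f g : I → P) :
    Option (I → P) :=
  if h : ∀ i, ∃ s, G.oplus (f i) (g i) = some s then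
    some (fun i => Classical.choose (h i)) else none

/-- The extension `∼*` of a relation on `P` to `P ⊕ P`. -/
def rstar {P : Type*} (r : P → P → Prop) : P ⊕ P → P ⊕ P → Prop
  | .inl a, .inl b => r a b
  | .inr a, .inr b => r a b
  | _, _ => False

theorem stmt6 {P : Type*} (U : PEA P) {I : Set P}
    (hI : U.toGPEA.IsNormalIdeal I) (a : P) :
    ((a ∈ I ↔ U.lsup (U.lsup a) ∈ I) ∧ (a ∈ I ↔ U.rsup (U.rsup a) ∈ I)) ∧
    (U.lsup a ∈ I ↔ U.rsup a ∈ I) := by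
  obtain ⟨_, hN⟩ := hI
  have hr : ∀ x : P, U.oplus x (U.rsup x) = some U.one := fun x =>
    Classical.choose_spec (U.le_one x)
  have hl : ∀ x : P, U.oplus (U.lsup x) x = some U.one := fun x =>
    Classical.choose_spec (U.le_one' x)
  refine ⟨⟨(hN _ _ _ _ (hl (U.lsup a)) (hl a)).symm, hN _ _ _ _ (hr a) (hr (U.rsup a))⟩,
    hN _ _ _ _ (hl a) (hr a)⟩
end

section
/- Let (P; ⊕, 0) be a GPEA with a unitizing GPEA-automorphism γ (i.e. γa ⊕ b exists iff b ⊕ a exists). Let Pᵉ be a disjoint copy of P via a bijection η: P → Pᵉ, set U := P ∪ Pᵉ with 1 := η0, and define + on U by: (1) a + b := a ⊕ b for a,b ∈ P when defined; (2) a + ηb := η(b \ a) when a ≤ b; (3) ηa + b := η(γb / a) when γb ≤ a; (4) ηa + ηb undefined. Then (U; +, 0, 1) is a pseudo effect algebra which is a binary unitization of P, and for all a ∈ P one has ηa = a˜ and γa = a⁻⁻ in U. -/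
open scoped Classical

section Unitization

variable {P : Type*} (G : GPEA P) (γ : P → P)

lemma uop_ll (a b : P) (x : P ⊕ P) :
    uop G γ (.inl a) (.inl b) = some x ↔ ∃ s, x = Sum.inl s ∧ G.oplus a b = some s := by
  simp only [uop]
  cases h : G.oplus a b <;> simp [eq_comm]

lemma uop_lr (a b : P) (x : P ⊕ P) :
    uop G γ (.inl a) (.inr b) = some x ↔ ∃ d, x = Sum.inr d ∧ G.oplus d a = some b := by
  simp only [uop]
  split_ifs with h
  · rw [Option.some_inj]
    constructor
    · rintro rfl; exact ⟨_, rfl, Classical.choose_spec h⟩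
    · rintro ⟨d, rfl, hd⟩
      rw [G.cancel_right (Classical.choose_spec h) hd]
  · constructor
    · rintro ⟨⟩
    · rintro ⟨d, rfl, hd⟩; exact absurd ⟨d, hd⟩ h

lemma uop_rl (a b : P) (x : P ⊕ P) :
    uop G γ (.inr a) (.inl b) = some x ↔ ∃ c, x = Sum.inr c ∧ G.oplus (γ b) c = some a := by
  simp only [uop]
  split_ifs with h
  · rw [Option.some_inj]
    constructor
    · rintro rfl; exact ⟨_, rfl, Classical.choose_spec h⟩
    · rintro ⟨c, rfl, hc⟩
      rw [G.cancel_left (Classical.choose_spec h) hc]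
  · constructor
    · rintro ⟨⟩
    · rintro ⟨c, rfl, hc⟩; exact absurd ⟨c, hc⟩ h

lemma uop_rr (a b : P) : uop G γ (.inr a) (.inr b) = none := rfl

variable {G γ} (hγ : G.IsUnitizing γ)
include hγ

lemma gamma_zero : γ G.zero = G.zero := by
  have h1 := hγ.2.1 _ _ _ (G.oplus_zero G.zero)
  exact G.cancel_left h1 (G.oplus_zero (γ G.zero))

lemma gamma_rev {a b t : P} (h : G.oplus (γ a) (γ b) = some t) :
    ∃ s, G.oplus a b = some s ∧ t = γ s := by
  obtain ⟨s, hs⟩ := hγ.2.2.1 a b ⟨t, h⟩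
  have h2 := hγ.2.1 _ _ _ hs
  rw [h] at h2
  exact ⟨s, hs, Option.some_inj.mp h2⟩

lemma uop_assoc₁ : ∀ {a b c ab s : P ⊕ P},
    uop G γ a b = some ab → uop G γ ab c = some s →
    ∃ bc, uop G γ b c = some bc ∧ uop G γ a bc = some s := by
  rintro (a|a) (b|b) (c|c) ab s hab hs
  · obtain ⟨p, rfl, hp⟩ := (uop_ll G γ a b ab).mp hab
    obtain ⟨q, rfl, hq⟩ := (uop_ll G γ p c _).mp hs
    obtain ⟨bc, h1, h2⟩ := G.assoc₁ hp hq
    exact ⟨.inl bc, (uop_ll ..).mpr ⟨bc, rfl, h1⟩, (uop_ll ..).mpr ⟨_, rfl, h2⟩⟩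
  · obtain ⟨p, rfl, hp⟩ := (uop_ll G γ a b ab).mp hab
    obtain ⟨s', rfl, hs'⟩ := (uop_lr G γ p c _).mp hs
    obtain ⟨q, h1, h2⟩ := G.assoc₂ hp hs'
    exact ⟨.inr q, (uop_lr ..).mpr ⟨q, rfl, h2⟩, (uop_lr ..).mpr ⟨s', rfl, h1⟩⟩
  · obtain ⟨d, rfl, hd⟩ := (uop_lr G γ a b ab).mp hab
    obtain ⟨s', rfl, hs'⟩ := (uop_rl G γ d c _).mp hs
    obtain ⟨e, h1, h2⟩ := G.assoc₁ hs' hd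
    exact ⟨.inr e, (uop_rl ..).mpr ⟨e, rfl, h2⟩, (uop_lr ..).mpr ⟨s', rfl, h1⟩⟩
  · obtain ⟨d, rfl, hd⟩ := (uop_lr G γ a b ab).mp hab
    exact absurd hs (by rw [uop_rr]; rintro ⟨⟩)
  · obtain ⟨d, rfl, hd⟩ := (uop_rl G γ a b ab).mp hab
    obtain ⟨s', rfl, hs'⟩ := (uop_rl G γ d c _).mp hs
    obtain ⟨q, h1, h2⟩ := G.assoc₂ hs' hd
    obtain ⟨p, hp, rfl⟩ := gamma_rev hγ h1
    exact ⟨.inl p, (uop_ll ..).mpr ⟨p, rfl, hp⟩, (uop_rl ..).mpr ⟨s', rfl, h2⟩⟩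
  · obtain ⟨d, rfl, hd⟩ := (uop_rl G γ a b ab).mp hab
    exact absurd hs (by rw [uop_rr]; rintro ⟨⟩)
  · exact absurd hab (by rw [uop_rr]; rintro ⟨⟩)
  · exact absurd hab (by rw [uop_rr]; rintro ⟨⟩)

lemma uop_assoc₂ : ∀ {a b c bc s : P ⊕ P},
    uop G γ b c = some bc → uop G γ a bc = some s →
    ∃ ab, uop G γ a b = some ab ∧ uop G γ ab c = some s := by
  rintro (a|a) (b|b) (c|c) bc s hbc hs
  · obtain ⟨p, rfl, hp⟩ := (uop_ll G γ b c bc).mp hbc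
    obtain ⟨q, rfl, hq⟩ := (uop_ll G γ a p _).mp hs
    obtain ⟨ab, h1, h2⟩ := G.assoc₂ hp hq
    exact ⟨.inl ab, (uop_ll ..).mpr ⟨ab, rfl, h1⟩, (uop_ll ..).mpr ⟨_, rfl, h2⟩⟩
  · obtain ⟨d, rfl, hd⟩ := (uop_lr G γ b c bc).mp hbc
    obtain ⟨s', rfl, hs'⟩ := (uop_lr G γ a d _).mp hs
    obtain ⟨p, h1, h2⟩ := G.assoc₁ hs' hd
    exact ⟨.inl p, (uop_ll ..).mpr ⟨p, rfl, h1⟩, (uop_lr ..).mpr ⟨s', rfl, h2⟩⟩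
  · obtain ⟨e, rfl, he⟩ := (uop_rl G γ b c bc).mp hbc
    obtain ⟨s', rfl, hs'⟩ := (uop_lr G γ a e _).mp hs
    obtain ⟨d, h1, h2⟩ := G.assoc₂ hs' he
    exact ⟨.inr d, (uop_lr ..).mpr ⟨d, rfl, h2⟩, (uop_rl ..).mpr ⟨s', rfl, h1⟩⟩
  · exact absurd hbc (by rw [uop_rr]; rintro ⟨⟩)
  · obtain ⟨p, rfl, hp⟩ := (uop_ll G γ b c bc).mp hbc
    obtain ⟨s', rfl, hs'⟩ := (uop_rl G γ a p _).mp hs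
    have hm := hγ.2.1 _ _ _ hp
    obtain ⟨d, h1, h2⟩ := G.assoc₁ hm hs'
    exact ⟨.inr d, (uop_rl ..).mpr ⟨d, rfl, h2⟩, (uop_rl ..).mpr ⟨s', rfl, h1⟩⟩
  · obtain ⟨d, rfl, hd⟩ := (uop_lr G γ b c bc).mp hbc
    exact absurd hs (by rw [uop_rr]; rintro ⟨⟩)
  · obtain ⟨e, rfl, he⟩ := (uop_rl G γ b c bc).mp hbc
    exact absurd hs (by rw [uop_rr]; rintro ⟨⟩)
  · exact absurd hbc (by rw [uop_rr]; rintro ⟨⟩)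

lemma uop_conj : ∀ {a b s : P ⊕ P}, uop G γ a b = some s →
    (∃ c, uop G γ c a = some s) ∧ ∃ d, uop G γ b d = some s := by
  rintro (a|a) (b|b) s h
  · obtain ⟨p, rfl, hp⟩ := (uop_ll G γ a b s).mp h
    obtain ⟨⟨c, hc⟩, ⟨d, hd⟩⟩ := G.conj hp
    exact ⟨⟨.inl c, (uop_ll ..).mpr ⟨p, rfl, hc⟩⟩, ⟨.inl d, (uop_ll ..).mpr ⟨p, rfl, hd⟩⟩⟩
  · obtain ⟨d, rfl, hd⟩ := (uop_lr G γ a b s).mp h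
    obtain ⟨c', hc'⟩ := (hγ.2.2.2 a d).mpr ⟨b, hd⟩
    obtain ⟨e, he⟩ := (G.conj hd).1
    obtain ⟨x, rfl⟩ := hγ.1.2 e
    exact ⟨⟨.inr c', (uop_rl ..).mpr ⟨d, rfl, hc'⟩⟩, ⟨.inl x, (uop_rl ..).mpr ⟨d, rfl, he⟩⟩⟩
  · obtain ⟨c', rfl, hc'⟩ := (uop_rl G γ a b s).mp h
    obtain ⟨f, hf⟩ := (G.conj hc').2
    obtain ⟨z, hz⟩ := (hγ.2.2.2 b c').mp ⟨a, hc'⟩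
    exact ⟨⟨.inl f, (uop_lr ..).mpr ⟨c', rfl, hf⟩⟩, ⟨.inr z, (uop_lr ..).mpr ⟨c', rfl, hz⟩⟩⟩
  · exact absurd h (by rw [uop_rr]; rintro ⟨⟩)

lemma uop_cancel_right : ∀ {a b c s : P ⊕ P},
    uop G γ a c = some s → uop G γ b c = some s → a = b := by
  rintro (a|a) (b|b) (c|c) s h1 h2
  · obtain ⟨p, rfl, hp⟩ := (uop_ll G γ a c s).mp h1
    obtain ⟨q, hq, hq'⟩ := (uop_ll G γ b c _).mp h2
    rw [Sum.inl.injEq] at hq; subst hq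
    rw [G.cancel_right hp hq']
  · obtain ⟨p, rfl, hp⟩ := (uop_lr G γ a c s).mp h1
    obtain ⟨q, hq, hq'⟩ := (uop_lr G γ b c _).mp h2
    rw [Sum.inr.injEq] at hq; subst hq
    rw [G.cancel_left hp hq']
  · obtain ⟨p, rfl, hp⟩ := (uop_ll G γ a c s).mp h1
    obtain ⟨q, hq, -⟩ := (uop_rl G γ b c _).mp h2
    exact absurd hq (by rintro ⟨⟩)
  · obtain ⟨p, rfl, -⟩ := (uop_lr G γ a c s).mp h1
    exact absurd h2 (by rw [uop_rr]; rintro ⟨⟩)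
  · obtain ⟨p, rfl, -⟩ := (uop_rl G γ a c s).mp h1
    obtain ⟨q, hq, -⟩ := (uop_ll G γ b c _).mp h2
    exact absurd hq (by rintro ⟨⟩)
  · exact absurd h1 (by rw [uop_rr]; rintro ⟨⟩)
  · obtain ⟨p, rfl, hp⟩ := (uop_rl G γ a c s).mp h1
    obtain ⟨q, hq, hq'⟩ := (uop_rl G γ b c _).mp h2
    rw [Sum.inr.injEq] at hq; subst hq
    rw [hp] at hq'
    rw [Option.some_inj.mp hq']
  · exact absurd h1 (by rw [uop_rr]; rintro ⟨⟩)

lemma uop_cancel_left : ∀ {a b c s : P ⊕ P},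
    uop G γ c a = some s → uop G γ c b = some s → a = b := by
  rintro (a|a) (b|b) (c|c) s h1 h2
  · obtain ⟨p, rfl, hp⟩ := (uop_ll G γ c a s).mp h1
    obtain ⟨q, hq, hq'⟩ := (uop_ll G γ c b _).mp h2
    rw [Sum.inl.injEq] at hq; subst hq
    rw [G.cancel_left hp hq']
  · obtain ⟨p, rfl, hp⟩ := (uop_rl G γ c a s).mp h1
    obtain ⟨q, hq, hq'⟩ := (uop_rl G γ c b _).mp h2
    rw [Sum.inr.injEq] at hq; subst hq
    rw [hγ.1.1 (G.cancel_right hp hq')]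
  · obtain ⟨p, rfl, hp⟩ := (uop_ll G γ c a s).mp h1
    obtain ⟨q, hq, -⟩ := (uop_lr G γ c b _).mp h2
    exact absurd hq (by rintro ⟨⟩)
  · obtain ⟨p, rfl, hp⟩ := (uop_rl G γ c a s).mp h1
    exact absurd h2 (by rw [uop_rr]; rintro ⟨⟩)
  · obtain ⟨p, rfl, -⟩ := (uop_lr G γ c a s).mp h1
    obtain ⟨q, hq, -⟩ := (uop_ll G γ c b _).mp h2
    exact absurd hq (by rintro ⟨⟩)
  · exact absurd h1 (by rw [uop_rr]; rintro ⟨⟩)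
  · obtain ⟨p, rfl, hp⟩ := (uop_lr G γ c a s).mp h1
    obtain ⟨q, hq, hq'⟩ := (uop_lr G γ c b _).mp h2
    rw [Sum.inr.injEq] at hq; subst hq
    rw [hp] at hq'
    rw [Option.some_inj.mp hq']
  · exact absurd h1 (by rw [uop_rr]; rintro ⟨⟩)

lemma uop_oplus_zero : ∀ a : P ⊕ P, uop G γ a (.inl G.zero) = some a := by
  rintro (a|a)
  · exact (uop_ll ..).mpr ⟨a, rfl, G.oplus_zero a⟩
  · exact (uop_rl ..).mpr ⟨a, rfl, by rw [gamma_zero hγ]; exact G.zero_oplus a⟩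

lemma uop_zero_oplus : ∀ a : P ⊕ P, uop G γ (.inl G.zero) a = some a := by
  rintro (a|a)
  · exact (uop_ll ..).mpr ⟨a, rfl, G.zero_oplus a⟩
  · exact (uop_lr ..).mpr ⟨a, rfl, G.oplus_zero a⟩

lemma uop_pos : ∀ {a b : P ⊕ P}, uop G γ a b = some (.inl G.zero) →
    a = Sum.inl G.zero ∧ b = Sum.inl G.zero := by
  rintro (a|a) (b|b) h
  · obtain ⟨p, hp, hp'⟩ := (uop_ll G γ a b _).mp h
    rw [Sum.inl.injEq] at hp
    obtain ⟨rfl, rfl⟩ := G.pos (hp ▸ hp')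
    exact ⟨rfl, rfl⟩
  · obtain ⟨p, hp, -⟩ := (uop_lr G γ a b _).mp h
    exact absurd hp (by rintro ⟨⟩)
  · obtain ⟨p, hp, -⟩ := (uop_rl G γ a b _).mp h
    exact absurd hp (by rintro ⟨⟩)
  · exact absurd h (by rw [uop_rr]; rintro ⟨⟩)

lemma uop_le_one : ∀ a : P ⊕ P, ∃ c, uop G γ a c = some (.inr G.zero) := by
  rintro (a|a)
  · exact ⟨.inr a, (uop_lr ..).mpr ⟨G.zero, rfl, G.zero_oplus a⟩⟩
  · obtain ⟨b, rfl⟩ := hγ.1.2 a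
    exact ⟨.inl b, (uop_rl ..).mpr ⟨G.zero, rfl, G.oplus_zero _⟩⟩

lemma uop_le_one' : ∀ a : P ⊕ P, ∃ d, uop G γ d a = some (.inr G.zero) := by
  rintro (a|a)
  · exact ⟨.inr (γ a), (uop_rl ..).mpr ⟨G.zero, rfl, G.oplus_zero _⟩⟩
  · exact ⟨.inl a, (uop_lr ..).mpr ⟨G.zero, rfl, G.zero_oplus a⟩⟩

end Unitization

theorem stmt8 {P : Type*} (G : GPEA P) (γ : P → P) (hγ : G.IsUnitizing γ) :
    ∃ U : PEA (P ⊕ P),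
      U.toGPEA.oplus = uop G γ ∧ U.toGPEA.zero = Sum.inl G.zero ∧
      U.one = Sum.inr G.zero ∧
      IsBinaryUnitization G U Sum.inl ∧
      (∀ a : P, U.oplus (Sum.inl a) (Sum.inr a) = some U.one) ∧
      (∀ a : P, ∃ l : P ⊕ P, U.oplus l (Sum.inl a) = some U.one ∧
        U.oplus (Sum.inl (γ a)) l = some U.one) := by
  classical
  refine ⟨⟨⟨uop G γ, Sum.inl G.zero, uop_assoc₁ hγ, uop_assoc₂ hγ, uop_conj hγ,
    uop_cancel_right hγ, uop_cancel_left hγ, uop_oplus_zero hγ, uop_zero_oplus hγ,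
    uop_pos hγ⟩, Sum.inr G.zero, uop_le_one hγ, uop_le_one' hγ⟩,
    rfl, rfl, rfl, ?_, ?_, ?_⟩
  · refine ⟨Sum.inl_injective, rfl, fun a b => rfl, fun a => by rintro ⟨⟩, ?_⟩
    rintro (x|x) (y|y) hx hy
    · exact absurd ⟨x, rfl⟩ hx
    · exact absurd ⟨x, rfl⟩ hx
    · exact absurd ⟨y, rfl⟩ hy
    · rfl
  · intro a
    exact (uop_lr G γ a a _).mpr ⟨G.zero, rfl, G.zero_oplus a⟩
  · intro a
    refine ⟨Sum.inr (γ a), (uop_rl G γ (γ a) a _).mpr ⟨G.zero, rfl, G.oplus_zero _⟩,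
      (uop_lr G γ (γ a) (γ a) _).mpr ⟨G.zero, rfl, G.zero_oplus _⟩⟩
end

section
/- Let V be a binary unitization of the GPEA P, let γ: P → P be the restriction to P of x ↦ x⁻⁻ in V, and let U be the γ-unitization of P. Then there exists a unique PEA-isomorphism φ: U → V which restricts to the identity on P, given by φa = a for a ∈ P and φx = (x⁻ in U)˜ in V for x ∈ U \ P. -/
open scoped Classical

section Aux

variable {P Q : Type*}

/-- A right supplement of an element of the range of `ι` is outside the range. -/
lemma aux_rsup_notrange (G : GPEA P) (V : PEA Q) (ι : P → Q)
    (hV : IsBinaryUnitization G V ι) {b : P} {s : Q}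
    (hs : V.oplus (ι b) s = some V.one) : s ∉ Set.range ι := by
  rintro ⟨r, rfl⟩
  rw [hV.2.2.1] at hs
  cases h' : G.oplus b r with
  | none => rw [h'] at hs; exact nomatch hs
  | some t => rw [h'] at hs; exact hV.2.2.2.1 t (Option.some.inj hs).symm

/-- A left supplement of an element of the range of `ι` is outside the range. -/
lemma aux_lsup_notrange (G : GPEA P) (V : PEA Q) (ι : P → Q)
    (hV : IsBinaryUnitization G V ι) {b : P} {s : Q}
    (hs : V.oplus s (ι b) = some V.one) : s ∉ Set.range ι := by
  rintro ⟨r, rfl⟩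
  rw [hV.2.2.1] at hs
  cases h' : G.oplus r b with
  | none => rw [h'] at hs; exact nomatch hs
  | some t => rw [h'] at hs; exact hV.2.2.2.1 t (Option.some.inj hs).symm

/-- If `y` is outside the range of `ι`, then `y ⊕ ιp` cannot be in the range. -/
lemma aux_L1 (G : GPEA P) (V : PEA Q) (ι : P → Q)
    (hV : IsBinaryUnitization G V ι) {y : Q} {p q : P} (hy : y ∉ Set.range ι)
    (h : V.oplus y (ι p) = some (ι q)) : False := by
  obtain ⟨n', hn⟩ := V.le_one y
  have hn'r : n' ∈ Set.range ι := by
    by_contra hc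
    rw [hV.2.2.2.2 y n' hy hc] at hn; exact nomatch hn
  obtain ⟨n, rfl⟩ := hn'r
  obtain ⟨s, hs⟩ := V.le_one (ι q)
  have hsr : s ∉ Set.range ι := aux_rsup_notrange G V ι hV hs
  obtain ⟨w, hw1, hw2⟩ := V.assoc₁ h hs
  have hwn : w = ι n := V.cancel_left hw2 hn
  subst hwn
  obtain ⟨d, hd⟩ := (V.conj hw1).2
  have hdr : d ∈ Set.range ι := by
    by_contra hc
    rw [hV.2.2.2.2 s d hsr hc] at hd; exact nomatch hd
  obtain ⟨d', rfl⟩ := hdr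
  obtain ⟨ab, hab, -⟩ := V.assoc₂ hd hn
  rw [hV.2.2.2.2 y s hy hsr] at hab
  exact nomatch hab

/-- If `y` is outside the range of `ι`, then `ιp ⊕ y` cannot be in the range. -/
lemma aux_L2 (G : GPEA P) (V : PEA Q) (ι : P → Q)
    (hV : IsBinaryUnitization G V ι) {y : Q} {p q : P} (hy : y ∉ Set.range ι)
    (h : V.oplus (ι p) y = some (ι q)) : False := by
  obtain ⟨m, hm⟩ := V.le_one' y
  have hmr : m ∈ Set.range ι := by
    by_contra hc
    rw [hV.2.2.2.2 m y hc hy] at hm; exact nomatch hm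
  obtain ⟨m', rfl⟩ := hmr
  obtain ⟨l, hl⟩ := V.le_one' (ι q)
  have hlr : l ∉ Set.range ι := aux_lsup_notrange G V ι hV hl
  obtain ⟨ab, hab1, hab2⟩ := V.assoc₂ h hl
  have habm : ab = ι m' := V.cancel_right hab2 hm
  subst habm
  obtain ⟨c, hc⟩ := (V.conj hab1).1
  have hcr : c ∈ Set.range ι := by
    by_contra hcc
    rw [hV.2.2.2.2 c l hcc hlr] at hc; exact nomatch hc
  obtain ⟨c', rfl⟩ := hcr
  obtain ⟨bc, hbc, -⟩ := V.assoc₁ hc hm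
  rw [hV.2.2.2.2 l y hlr hy] at hbc
  exact nomatch hbc

end Aux

theorem stmt9 {P Q : Type*} (G : GPEA P) (V : PEA Q) (ι : P → Q)
    (hV : IsBinaryUnitization G V ι) (γ : P → P)
    (hγ : ∀ a : P, ∃ l : Q, V.oplus l (ι a) = some V.one ∧
      V.oplus (ι (γ a)) l = some V.one)
    (U : PEA (P ⊕ P)) (hop : U.toGPEA.oplus = uop G γ)
    (hz : U.toGPEA.zero = Sum.inl G.zero) (ho : U.one = Sum.inr G.zero) :
    (∃! φ : P ⊕ P → Q, IsPEAIso U V φ ∧ ∀ a : P, φ (Sum.inl a) = ι a) ∧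
    (∀ φ : P ⊕ P → Q, IsPEAIso U V φ → (∀ a : P, φ (Sum.inl a) = ι a) →
      ∀ (x : P ⊕ P) (b : P) (t : Q), x ∉ Set.range (Sum.inl : P → P ⊕ P) →
        U.oplus (Sum.inl b) x = some U.one → V.oplus (ι b) t = some V.one →
        φ x = t) := by
  classical
  have hι : Function.Injective ι := hV.1
  have hsum : ∀ a b : P, V.oplus (ι a) (ι b) = (G.oplus a b).map ι := hV.2.2.1
  have hnone : ∀ x y : Q, x ∉ Set.range ι → y ∉ Set.range ι → V.oplus x y = none :=
    hV.2.2.2.2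
  -- the chosen right supplement of `ι b`
  set sb : P → Q := fun b => Classical.choose (V.le_one (ι b)) with hsbdef
  have hsb : ∀ b : P, V.oplus (ι b) (sb b) = some V.one :=
    fun b => Classical.choose_spec (V.le_one (ι b))
  have hsbr : ∀ b : P, sb b ∉ Set.range ι := fun b => aux_rsup_notrange G V ι hV (hsb b)
  set φ : P ⊕ P → Q := Sum.elim ι sb with hφdef
  have hφl : ∀ a : P, φ (Sum.inl a) = ι a := fun a => rfl
  have hφr : ∀ b : P, φ (Sum.inr b) = sb b := fun b => rfl
  -- `ι` of a decoded sum
  have hsum' : ∀ {a b c : P}, G.oplus a b = some c →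
      V.oplus (ι a) (ι b) = some (ι c) := by
    intro a b c h
    rw [hsum a b, h]; rfl
  have hsum'' : ∀ {a b : P} {c : Q}, V.oplus (ι a) (ι b) = some c →
      ∃ d : P, c = ι d ∧ G.oplus a b = some d := by
    intro a b c h
    rw [hsum a b] at h
    cases h' : G.oplus a b with
    | none => rw [h'] at h; exact nomatch h
    | some d => rw [h'] at h; exact ⟨d, (Option.some.inj h).symm, rfl⟩
  -- φ maps the unit to the unit
  have hone : φ U.one = V.one := by
    rw [ho, hφr]
    have h0 : V.oplus (ι G.zero) (sb G.zero) = some (sb G.zero) := by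
      rw [hV.2.1]; exact V.zero_oplus (sb G.zero)
    exact Option.some.inj ((hsb G.zero).symm.trans h0).symm
  -- forward morphism property
  have hmor : ∀ x y s : P ⊕ P, U.oplus x y = some s →
      V.oplus (φ x) (φ y) = some (φ s) := by
    rintro (a | a) (b | b) s h <;> simp only [hop, uop] at h
    · -- inl, inl
      cases h' : G.oplus a b with
      | none => rw [h'] at h; exact nomatch h
      | some c =>
        rw [h'] at h
        have : s = Sum.inl c := (Option.some.inj h).symm
        subst this
        exact hsum' h'
    · -- inl, inr
      by_cases hle : G.leL a b
      · rw [dif_pos hle] at h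
        have hd : G.oplus (Classical.choose hle) a = some b := Classical.choose_spec hle
        have hs : s = Sum.inr (Classical.choose hle) := (Option.some.inj h).symm
        subst hs
        set d := Classical.choose hle with hddef
        obtain ⟨w, hw1, hw2⟩ := V.assoc₁ (hsum' hd) (hsb b)
        have : w = sb d := V.cancel_left hw2 (hsb d)
        subst this
        exact hw1
      · rw [dif_neg hle] at h; exact nomatch h
    · -- inr, inl
      by_cases hle : G.le (γ b) a
      · rw [dif_pos hle] at h
        have he : G.oplus (γ b) (Classical.choose hle) = some a := Classical.choose_spec hle
        have hs : s = Sum.inr (Classical.choose hle) := (Option.some.inj h).symm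
        subst hs
        set e := Classical.choose hle with hedef
        obtain ⟨l, hl1, hl2⟩ := hγ b
        obtain ⟨w, hw1, hw2⟩ := V.assoc₁ (hsum' he) (hsb a)
        have hwl : w = l := V.cancel_left hw2 hl2
        subst hwl
        obtain ⟨w2, hw21, hw22⟩ := V.assoc₁ hw1 hl1
        have : w2 = sb e := V.cancel_left hw22 (hsb e)
        subst this
        exact hw21
      · rw [dif_neg hle] at h; exact nomatch h
    · exact nomatch h
  -- reflection of definedness
  have hrefl : ∀ x y : P ⊕ P, (∃ s, V.oplus (φ x) (φ y) = some s) →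
      ∃ t, U.oplus x y = some t := by
    rintro (a | a) (b | b) ⟨x, hx⟩
    · obtain ⟨d, -, hd⟩ := hsum'' hx
      exact ⟨Sum.inl d, by simp only [hop, uop, hd]; rfl⟩
    · -- inl, inr : show `G.leL a b`
      obtain ⟨v, hv⟩ := V.le_one' x
      obtain ⟨m, hm1, hm2⟩ := V.assoc₂ hx hv
      have hmb : m = ι b := V.cancel_right hm2 (hsb b)
      subst hmb
      have hvr : v ∈ Set.range ι := by
        by_contra hc
        exact aux_L1 G V ι hV hc hm1
      obtain ⟨v', rfl⟩ := hvr
      obtain ⟨d, hdι, hd⟩ := hsum'' hm1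
      have hle : G.leL a b := ⟨v', by rwa [hι hdι.symm] at hd⟩
      exact ⟨Sum.inr (Classical.choose hle), by simp only [hop, uop, dif_pos hle]⟩
    · -- inr, inl : show `G.le (γ b) a`
      obtain ⟨v, hv⟩ := V.le_one' x
      obtain ⟨m, hm1, hm2⟩ := V.assoc₂ hx hv
      obtain ⟨l, hl1, hl2⟩ := hγ b
      have hml : m = l := V.cancel_right hm2 hl1
      subst hml
      obtain ⟨m2, hm21, hm22⟩ := V.assoc₂ hm1 hl2
      have hm2a : m2 = ι a := V.cancel_right hm22 (hsb a)
      subst hm2a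
      have hvr : v ∈ Set.range ι := by
        by_contra hc
        exact aux_L2 G V ι hV hc hm21
      obtain ⟨v', rfl⟩ := hvr
      obtain ⟨d, hdι, hd⟩ := hsum'' hm21
      have hle : G.le (γ b) a := ⟨v', by rwa [hι hdι.symm] at hd⟩
      exact ⟨Sum.inr (Classical.choose hle), by simp only [hop, uop, dif_pos hle]⟩
    · have hxx : V.oplus (sb a) (sb b) = some x := hx
      rw [hnone (sb a) (sb b) (hsbr a) (hsbr b)] at hxx
      exact nomatch hxx
  -- bijectivity
  have hbij : Function.Bijective φ := by
    constructor
    · rintro (a | a) (b | b) h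
      · exact congrArg Sum.inl (hι h)
      · exact absurd ⟨a, show ι a = sb b from h⟩ (hsbr b)
      · exact absurd ⟨b, (show sb a = ι b from h).symm⟩ (hsbr a)
      · have hab : sb a = sb b := h
        have : ι a = ι b := V.cancel_right (hab ▸ hsb a) (hsb b)
        exact congrArg Sum.inr (hι this)
    · intro x
      by_cases hx : x ∈ Set.range ι
      · obtain ⟨a, rfl⟩ := hx
        exact ⟨Sum.inl a, rfl⟩
      · obtain ⟨l, hl⟩ := V.le_one' x
        have hlr : l ∈ Set.range ι := by
          by_contra hc
          rw [hnone l x hc hx] at hl; exact nomatch hl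
        obtain ⟨b, rfl⟩ := hlr
        have : x = sb b := V.cancel_left hl (hsb b)
        exact ⟨Sum.inr b, this.symm⟩
  have hiso : IsPEAIso U V φ := ⟨hbij, hmor, hrefl, hone⟩
  -- key computation in U: `inl b ⊕ inr b = 1`
  have hUone : ∀ b : P, U.oplus (Sum.inl b) (Sum.inr b) = some U.one := by
    intro b
    have hle : G.leL b b := ⟨G.zero, G.zero_oplus b⟩
    have hch : Classical.choose hle = G.zero :=
      G.cancel_right (Classical.choose_spec hle) (G.zero_oplus b)
    simp only [hop, uop, dif_pos hle, hch, ho]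
  refine ⟨⟨φ, ⟨hiso, hφl⟩, ?_⟩, ?_⟩
  · -- uniqueness
    rintro ψ ⟨hψiso, hψl⟩
    funext x
    cases x with
    | inl a => rw [hψl a]; rfl
    | inr b =>
      have h1 : V.oplus (ι b) (ψ (Sum.inr b)) = some V.one := by
        have := hψiso.2.1 _ _ _ (hUone b)
        rwa [hψl b, hψiso.2.2.2] at this
      exact V.cancel_left h1 (hsb b)
  · -- second statement
    intro ψ hψiso hψl x b t hx hub hvb
    obtain (a | c) := x
    · exact absurd ⟨a, rfl⟩ hx
    · -- from `hub` deduce `c = b`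
      have hcb : c = b := by
        simp only [hop, uop, ho] at hub
        by_cases hle : G.leL b c
        · rw [dif_pos hle] at hub
          have hch : Classical.choose hle = G.zero :=
            Sum.inr.inj (Option.some.inj hub)
          have := Classical.choose_spec hle
          rw [hch, G.zero_oplus b] at this
          exact (Option.some.inj this).symm
        · rw [dif_neg hle] at hub; exact nomatch hub
      rw [hcb]
      have h1 : V.oplus (ι b) (ψ (Sum.inr b)) = some V.one := by
        have := hψiso.2.1 _ _ _ (hUone b)
        rwa [hψl b, hψiso.2.2.2] at this
      exact V.cancel_left h1 hvb
end

section
/- Let P be a GPEA, I a nonempty index set, λ, ρ: I → I bijections, and define γ: Pᴵ → Pᴵ (coordinatewise GPEA) by γ((aᵢ)ᵢ) = (a_{ρλ⁻¹(i)})ᵢ. Then condition (KCI) [for all families (aᵢ), (bᵢ) in Pᴵ and all i: a_{ρi} ⊕ bᵢ exists in P iff bᵢ ⊕ a_{λi} exists in P] holds iff γ is a unitizing GPEA-automorphism of Pᴵ. -/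
open scoped Classical

theorem stmt10 {P : Type*} (G : GPEA P) {I : Type*} [Nonempty I] (l ρ : I ≃ I)
    (GI : GPEA (I → P)) (hop : GI.oplus = piOplus G)
    (hz : GI.zero = fun _ => G.zero) :
    (∀ (a b : I → P) (i : I),
        (∃ s, G.oplus (a (ρ i)) (b i) = some s) ↔
          ∃ s, G.oplus (b i) (a (l i)) = some s) ↔
      GI.IsUnitizing (fun f i => f (ρ (l.symm i))) := by
  have pidef : ∀ f g : I → P, (∃ s, GI.oplus f g = some s) ↔
      ∀ i, ∃ s, G.oplus (f i) (g i) = some s := by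
    intro f g
    rw [hop]
    unfold piOplus
    split_ifs with h
    · exact ⟨fun _ => h, fun _ => ⟨_, rfl⟩⟩
    · exact ⟨fun ⟨s, hs⟩ => by simp at hs, fun hh => absurd hh h⟩
  constructor
  · intro hKCI
    refine ⟨?_, ?_, ?_, ?_⟩
    · refine Function.bijective_iff_has_inverse.mpr
        ⟨fun f i => f (l (ρ.symm i)), ?_, ?_⟩ <;> intro f <;> funext i <;> simp
    · intro a b s hs
      rw [hop] at hs ⊢
      unfold piOplus at hs ⊢
      by_cases h : ∀ i, ∃ t, G.oplus (a i) (b i) = some t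
      · rw [dif_pos h] at hs
        have hs' : s = fun i => Classical.choose (h i) := (Option.some.inj hs).symm
        have h' : ∀ i, ∃ t,
            G.oplus (a (ρ (l.symm i))) (b (ρ (l.symm i))) = some t :=
          fun i => h (ρ (l.symm i))
        rw [dif_pos h']
        congr 1
        funext i
        rw [hs']
      · rw [dif_neg h] at hs
        simp at hs
    · intro a b hab
      rw [pidef] at hab ⊢
      intro i
      have := hab (l (ρ.symm i))
      simpa using this
    · intro a b
      rw [pidef, pidef]
      constructor
      · intro h i
        have := (hKCI a (fun j => b (l j)) (l.symm i)).mp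
        simp only [Equiv.apply_symm_apply] at this
        exact this (h i)
      · intro h i
        have := (hKCI a (fun j => b (l j)) (l.symm i)).mpr
        simp only [Equiv.apply_symm_apply] at this
        exact this (h i)
  · intro hU a b i
    obtain ⟨-, -, -, h4⟩ := hU
    have key := h4 a (fun j => if j = l i then b i else G.zero)
    rw [pidef, pidef] at key
    have L : (∀ j, ∃ s, G.oplus (a (ρ (l.symm j)))
        ((fun j => if j = l i then b i else G.zero) j) = some s) ↔
        ∃ s, G.oplus (a (ρ i)) (b i) = some s := by
      constructor
      · intro h
        have := h (l i)
        simpa using this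
      · intro hs j
        by_cases hj : j = l i
        · subst hj; simpa using hs
        · simp only [hj, if_neg, if_false]
          exact ⟨_, G.oplus_zero _⟩
    have R : (∀ j, ∃ s, G.oplus
        ((fun j => if j = l i then b i else G.zero) j) (a j) = some s) ↔
        ∃ s, G.oplus (b i) (a (l i)) = some s := by
      constructor
      · intro h
        have := h (l i)
        simpa using this
      · intro hs j
        by_cases hj : j = l i
        · subst hj; simpa using hs
        · simp only [hj, if_neg, if_false]
          exact ⟨_, G.zero_oplus _⟩
    exact L.symm.trans (key.trans R)
end

section
/- A weak congruence ∼ on a PEA P is a congruence (satisfies condition (C3)) iff it satisfies: (C4') a ∼ b implies a˜ ∼ b˜ and a⁻ ∼ b⁻; and (C5') a ∼ b ⊕ c implies there exist a₁ ∼ b and a₂ ∼ c with a = a₁ ⊕ a₂. -/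
open scoped Classical

namespace PEA

variable {P : Type*} (U : PEA P)

lemma rsup_spec (a : P) : U.oplus a (U.rsup a) = some U.one :=
  Classical.choose_spec (U.le_one a)

lemma lsup_spec (a : P) : U.oplus (U.lsup a) a = some U.one :=
  Classical.choose_spec (U.le_one' a)

lemma rsup_unique {a c : P} (h : U.oplus a c = some U.one) : c = U.rsup a :=
  U.cancel_left h (U.rsup_spec a)

lemma lsup_unique {a c : P} (h : U.oplus c a = some U.one) : c = U.lsup a :=
  U.cancel_right h (U.lsup_spec a)

lemma one_oplus_eq {x w : P} (h : U.oplus U.one x = some w) : x = U.toGPEA.zero := by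
  obtain ⟨y, hy⟩ := U.le_one w
  obtain ⟨xy, hxy, hxy1⟩ := U.assoc₁ h hy
  have : xy = U.toGPEA.zero := U.cancel_left hxy1 (U.oplus_zero U.one)
  exact (U.pos (this ▸ hxy)).1

lemma oplus_one_eq {x w : P} (h : U.oplus x U.one = some w) : x = U.toGPEA.zero := by
  obtain ⟨y, hy⟩ := U.le_one' w
  obtain ⟨yx, hyx, hyx1⟩ := U.assoc₂ h hy
  have : yx = U.toGPEA.zero := U.cancel_right hyx1 (U.zero_oplus U.one)
  exact (U.pos (this ▸ hyx)).2

end PEA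

theorem stmt11 {P : Type*} (U : PEA P) (r : P → P → Prop)
    (hw : U.toGPEA.IsWeakCong r) :
    U.toGPEA.C3 r ↔
      ((∀ a b : P, r a b → r (U.rsup a) (U.rsup b) ∧ r (U.lsup a) (U.lsup b)) ∧
        U.toGPEA.C5' r) := by
  obtain ⟨heq, hwc⟩ := hw
  constructor
  · intro h3
    have hc4 : ∀ a b : P, r a b → r (U.rsup a) (U.rsup b) ∧ r (U.lsup a) (U.lsup b) := by
      intro a b hab
      constructor
      · -- rsup part
        have ha := U.rsup_spec a
        obtain ⟨c, hc, t, ht⟩ := (h3 a (U.rsup a) U.one ha).1 b hab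
        have hts : r U.one t := hwc a (U.rsup a) b c U.one t ha ht hab hc
        obtain ⟨d, hd⟩ := U.le_one t
        obtain ⟨d₁, hd₁, t', ht'⟩ := (h3 t d U.one hd).1 U.one (heq.symm hts)
        have hd0 : r d U.toGPEA.zero := (U.one_oplus_eq ht') ▸ hd₁
        obtain ⟨cd, hcd, hcd1⟩ := U.assoc₁ ht hd
        have hcdb : cd = U.rsup b := U.rsup_unique hcd1
        have hcdc : r cd c :=
          hwc c d c U.toGPEA.zero cd c hcd (U.oplus_zero c) (heq.refl c) hd0
        exact hcdb ▸ heq.trans hc (heq.symm hcdc)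
      · -- lsup part
        have ha := U.lsup_spec a
        obtain ⟨c, hc, t, ht⟩ := (h3 (U.lsup a) a U.one ha).2 b hab
        have hts : r U.one t := hwc (U.lsup a) a c b U.one t ha ht hc hab
        obtain ⟨d, hd⟩ := U.le_one' t
        obtain ⟨d₁, hd₁, t', ht'⟩ := (h3 d t U.one hd).2 U.one (heq.symm hts)
        have hd0 : r d U.toGPEA.zero := (U.oplus_one_eq ht') ▸ hd₁
        obtain ⟨dc, hdc, hdc1⟩ := U.assoc₂ ht hd
        have hdcb : dc = U.lsup b := U.lsup_unique hdc1
        have hdcc : r dc c :=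
          hwc d c U.toGPEA.zero c dc c hdc (U.zero_oplus c) hd0 (heq.refl c)
        exact hdcb ▸ heq.trans hc (heq.symm hdcc)
    refine ⟨hc4, ?_⟩
    intro a b c s hbc has
    obtain ⟨cs, hcs, hcs1⟩ := U.assoc₁ hbc (U.rsup_spec s)
    have hras : r (U.rsup a) (U.rsup s) := (hc4 a s has).1
    obtain ⟨c₂, hc₂, u, hu⟩ := (h3 c (U.rsup s) cs hcs).2 (U.rsup a) (heq.symm hras)
    have hcsu : r cs u :=
      hwc c (U.rsup s) c₂ (U.rsup a) cs u hcs hu hc₂ (heq.symm hras)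
    have hbcs : b = U.lsup cs := U.lsup_unique hcs1
    have hlu : r b (U.lsup u) := hbcs ▸ (hc4 cs u hcsu).2
    obtain ⟨v, hv, hv1⟩ := U.assoc₂ hu (U.lsup_spec u)
    have hva : v = a := U.cancel_right hv1 (U.rsup_spec a)
    exact ⟨U.lsup u, c₂, heq.symm hlu, heq.symm hc₂, hva ▸ hv⟩
  · rintro ⟨hc4, hc5⟩
    intro a b s hab
    constructor
    · intro a₁ ha₁
      obtain ⟨bs, hbs, hbs1⟩ := U.assoc₁ hab (U.rsup_spec s)
      have hbsa : bs = U.rsup a := U.rsup_unique hbs1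
      have h1 : r (U.rsup a₁) bs := hbsa ▸ heq.symm (hc4 a a₁ ha₁).1
      obtain ⟨x, y, hxb, hys, hxy⟩ := hc5 (U.rsup a₁) b (U.rsup s) bs hbs h1
      obtain ⟨ax, hax, _⟩ := U.assoc₂ hxy (U.rsup_spec a₁)
      exact ⟨x, heq.symm hxb, ax, hax⟩
    · intro b₂ hb₂
      obtain ⟨sa, hsa, hsa1⟩ := U.assoc₂ hab (U.lsup_spec s)
      have hsab : sa = U.lsup b := U.lsup_unique hsa1
      have h1 : r (U.lsup b₂) sa := hsab ▸ heq.symm (hc4 b b₂ hb₂).2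
      obtain ⟨x, y, hxs, hya, hxy⟩ := hc5 (U.lsup b₂) (U.lsup s) a sa hsa h1
      obtain ⟨yb, hyb, _⟩ := U.assoc₁ hxy (U.lsup_spec b₂)
      exact ⟨y, heq.symm hya, yb, hyb⟩
end

section
/- A congruence ∼ on a GPEA P satisfying (C4) and (C5') is a Riesz congruence iff every equivalence class of ∼ is both upward and downward directed. -/
open scoped Classical

theorem stmt12 {P : Type*} (G : GPEA P) (r : P → P → Prop)
    (hw : G.IsWeakCong r) (h3 : G.C3 r) (h4 : G.C4 r) (h5 : G.C5' r) :
    G.CR r ↔ ∀ a b : P, r a b →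
      (∃ d, r a d ∧ G.le a d ∧ G.le b d) ∧ (∃ c, r a c ∧ G.le c a ∧ G.le c b) := by
  obtain ⟨heq, hcong⟩ := hw
  constructor
  · intro hCR a b hab
    obtain ⟨c, d, hca, had, hcb, hbd, hc1, hc2, hd1, hd2⟩ := hCR a b hab
    refine ⟨⟨d, ?_, had, hbd⟩, ⟨c, ?_, hca, hcb⟩⟩
    · obtain ⟨e, he⟩ := had
      obtain ⟨x, hx⟩ := (G.conj he).1
      exact heq.symm (hcong x a G.zero a d a hx (G.zero_oplus a) (hd1 x hx) (heq.refl a))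
    · obtain ⟨e, he⟩ := hca
      obtain ⟨x, hx⟩ := (G.conj he).1
      exact hcong x c G.zero c a c hx (G.zero_oplus c) (hc1 x hx) (heq.refl c)
  · intro H a b hab
    obtain ⟨⟨d, had, hadle, hbdle⟩, ⟨c, hac, hcale, hcble⟩⟩ := H a b hab
    refine ⟨c, d, hcale, hadle, hcble, hbdle, ?_, ?_, ?_, ?_⟩
    · intro x hx
      exact h4 c c x G.zero a c (heq.refl c) (Or.inr ⟨hx, G.zero_oplus c, hac⟩)
    · intro x hx
      exact h4 c c x G.zero b c (heq.refl c)
        (Or.inr ⟨hx, G.zero_oplus c, heq.trans (heq.symm hab) hac⟩)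
    · intro x hx
      exact h4 a a x G.zero d a (heq.refl a) (Or.inr ⟨hx, G.zero_oplus a, heq.symm had⟩)
    · intro x hx
      exact h4 b b x G.zero d b (heq.refl b)
        (Or.inr ⟨hx, G.zero_oplus b, heq.trans (heq.symm had) hab⟩)
end

section
/- If ∼ is a Riesz congruence on a GPEA P, then I := {i ∈ P : i ∼ 0} is a normal Riesz ideal in P, and ∼ equals the relation ∼_I (where a ∼_I b iff there exist i, j ∈ I with i ≤ a, j ≤ b, and a\i = b\j). -/
open scoped Classical

theorem stmt13 {P : Type*} (G : GPEA P) (r : P → P → Prop) (h : G.IsRieszCong r) :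
    G.IsNormalRieszIdeal {i : P | r i G.zero} ∧
    ∀ a b : P, r a b ↔ G.simI {i : P | r i G.zero} a b := by
  obtain ⟨⟨heq, hwc⟩, hC3, hC4, hC5, hCR⟩ := h
  -- normality helper: if x ⊕ c = s = c ⊕ y then x ∈ I ↔ y ∈ I
  have hnorm : ∀ x c y s : P, G.oplus x c = some s → G.oplus c y = some s →
      (r x G.zero ↔ r y G.zero) := by
    intro x c y s hxc hcy
    constructor
    · intro hx
      have hsc : r s c := hwc x c G.zero c s c hxc (G.zero_oplus c) hx (heq.refl c)
      exact hC4 c c y G.zero s c (heq.refl c) (Or.inl ⟨hcy, G.oplus_zero c, hsc⟩)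
    · intro hy
      have hsc : r s c := hwc c y c G.zero s c hcy (G.oplus_zero c) (heq.refl c) hy
      exact hC4 c c x G.zero s c (heq.refl c) (Or.inr ⟨hxc, G.zero_oplus c, hsc⟩)
  -- floor package: common lower bound with differences (on both sides) in I
  have hfloor : ∀ a b : P, r a b → ∃ c : P, G.le c a ∧ G.le c b ∧
      (∃ x, r x G.zero ∧ G.oplus x c = some a) ∧
      (∃ y, r y G.zero ∧ G.oplus y c = some b) ∧
      (∃ x', r x' G.zero ∧ G.oplus c x' = some a) ∧
      (∃ y', r y' G.zero ∧ G.oplus c y' = some b) := by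
    intro a b hab
    obtain ⟨c, d, hca, had, hcb, hbd, H1, H2, H3, H4⟩ := hCR a b hab
    obtain ⟨z, hz⟩ := hca
    obtain ⟨x, hx⟩ := (G.conj hz).1
    have hxI : r x G.zero := H1 x hx
    obtain ⟨x', hx'⟩ := (G.conj hx).2
    have hx'I : r x' G.zero := (hnorm x c x' a hx hx').mp hxI
    obtain ⟨z₂, hz₂⟩ := hcb
    obtain ⟨y, hy⟩ := (G.conj hz₂).1
    have hyI : r y G.zero := H2 y hy
    obtain ⟨y', hy'⟩ := (G.conj hy).2
    have hy'I : r y' G.zero := (hnorm y c y' b hy hy').mp hyI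
    exact ⟨c, ⟨z, hz⟩, ⟨z₂, hz₂⟩, ⟨x, hxI, hx⟩, ⟨y, hyI, hy⟩, ⟨x', hx'I, hx'⟩, ⟨y', hy'I, hy'⟩⟩
  -- the ideal structure
  have hzero : r G.zero G.zero := heq.refl G.zero
  have hdown : ∀ a, r a G.zero → ∀ b : P, G.le b a → r b G.zero := by
    intro a ha b hba
    obtain ⟨z, hz⟩ := hba
    obtain ⟨u, v, hub, hvz, huv⟩ := hC5 G.zero b z a hz (heq.symm ha)
    obtain ⟨hu0, hv0⟩ := G.pos huv
    exact heq.symm (hu0 ▸ hub)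
  have hsum : ∀ a, r a G.zero → ∀ b, r b G.zero → ∀ s, G.oplus a b = some s →
      r s G.zero := by
    intro a ha b hb s hab
    exact hwc a b G.zero G.zero s G.zero hab (G.zero_oplus G.zero) ha hb
  -- R1
  have hR1 : G.R1 {i : P | r i G.zero} := by
    intro i hi a b s hab his
    obtain ⟨c, hic⟩ := his
    obtain ⟨c₀, hc₀⟩ := (G.conj hic).1
    have hsc₀ : r s c₀ := hwc c₀ i c₀ G.zero s c₀ hc₀ (G.oplus_zero c₀) (heq.refl c₀) hi
    obtain ⟨c₁, c₂, hc₁a, hc₂b, hc₁₂⟩ := hC5 c₀ a b s hab (heq.symm hsc₀)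
    obtain ⟨f₁, hf₁c₁, hf₁a, _, _, ⟨x₁, hx₁I, hx₁⟩, ⟨J₁, hJ₁I, hJ₁⟩⟩ := hfloor c₁ a hc₁a
    -- hx₁ : f₁ ⊕ x₁ = c₁ , hJ₁ : f₁ ⊕ J₁ = a
    have hleJ₁a : G.le J₁ a := (G.conj hJ₁).2
    obtain ⟨R₁, hR₁e, hfR₁⟩ := G.assoc₁ hx₁ hc₁₂
    obtain ⟨V, hVL, hfV⟩ := G.assoc₁ hfR₁ hc₀
    obtain ⟨V', hJb, hfV'⟩ := G.assoc₁ hJ₁ hab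
    have hV : V = V' := G.cancel_left hfV hfV'
    rw [← hV] at hJb
    -- hVL : R₁ ⊕ i = V , hJb : J₁ ⊕ b = V
    obtain ⟨w, hw⟩ := (G.conj hVL).2
    have hVw : r V w := hwc i w G.zero w V w hw (G.zero_oplus w) hi (heq.refl w)
    have hVb : r V b := hwc J₁ b G.zero b V b hJb (G.zero_oplus b) hJ₁I (heq.refl b)
    have hwb : r w b := heq.trans (heq.symm hVw) hVb
    obtain ⟨h₂, hh₂w, hh₂b, ⟨y₂, hy₂I, hy₂⟩, ⟨k₂, hk₂I, hk₂⟩, _, _⟩ := hfloor w b hwb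
    -- hy₂ : y₂ ⊕ h₂ = w , hk₂ : k₂ ⊕ h₂ = b
    obtain ⟨t₁, hiy, ht₁⟩ := G.assoc₂ hy₂ hw
    obtain ⟨t₂, hJk, ht₂⟩ := G.assoc₂ hk₂ hJb
    have ht : t₁ = t₂ := G.cancel_right ht₁ ht₂
    exact ⟨J₁, hJ₁I, k₂, hk₂I, hleJ₁a, ⟨h₂, hk₂⟩, t₂, hJk, ⟨y₂, ht ▸ hiy⟩⟩
  -- R2
  have hR2 : G.R2 {i : P | r i G.zero} := by
    intro i hi a hia
    constructor
    · intro b x s hxi hxb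
      have hax : r a x := hwc x i x G.zero a x hxi (G.oplus_zero x) (heq.refl x) hi
      obtain ⟨b₁, hbb₁, t₀, ht₀⟩ := (hC3 x b s hxb).1 a (heq.symm hax)
      obtain ⟨f, hfb, hfb₁, ⟨j, hjI, hj⟩, _, _, _⟩ := hfloor b b₁ hbb₁
      refine ⟨j, hjI, ⟨f, hj⟩, ?_⟩
      intro c hc
      have hcf : c = f := G.cancel_left hc hj
      subst hcf
      obtain ⟨w, hw⟩ := hfb₁
      obtain ⟨af, haf, _⟩ := G.assoc₂ hw ht₀
      exact ⟨af, haf⟩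
    · intro b y s hiy hby
      have hay : r a y := hwc i y G.zero y a y hiy (G.zero_oplus y) hi (heq.refl y)
      obtain ⟨a₂, hba₂, t₀, ht₀⟩ := (hC3 b y s hby).2 a (heq.symm hay)
      obtain ⟨g, hgb, hga₂, _, ⟨χ, hχI, hχ⟩, ⟨u, huI, hu⟩, _⟩ := hfloor b a₂ hba₂
      -- hχ : χ ⊕ g = a₂ , hu : g ⊕ u = b
      refine ⟨u, huI, (G.conj hu).2, ?_⟩
      intro z hz
      have hzg : z = g := G.cancel_right hz hu
      subst hzg
      obtain ⟨ga, hga, _⟩ := G.assoc₁ hχ ht₀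
      exact ⟨ga, hga⟩
  -- ∼ = ∼_I
  have hiff : ∀ a b : P, r a b ↔ G.simI {i : P | r i G.zero} a b := by
    intro a b
    constructor
    · intro hab
      obtain ⟨c, _, _, _, _, ⟨x', hx'I, hx'⟩, ⟨y', hy'I, hy'⟩⟩ := hfloor a b hab
      exact ⟨x', hx'I, y', hy'I, c, hx', hy'⟩
    · rintro ⟨i, hiI, j, hjI, d, hdi, hdj⟩
      have h1 : r a d := hwc d i d G.zero a d hdi (G.oplus_zero d) (heq.refl d) hiI
      have h2 : r b d := hwc d j d G.zero b d hdj (G.oplus_zero d) (heq.refl d) hjI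
      exact heq.trans h1 (heq.symm h2)
  refine ⟨⟨⟨⟨⟨G.zero, hzero⟩, ?_, ?_⟩, ?_⟩, hR1, hR2⟩, hiff⟩
  · intro a ha b hba
    exact hdown a ha b hba
  · intro a ha b hb s hab
    exact hsum a ha b hb s hab
  · intro a b c s h1 h2
    exact hnorm a c b s h1 h2
end
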